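/- arXiv:2603.13848 — 2 statements merged into one kernel-verified Lean document; each statement's English description precedes it below -/
import Mathlib

section
/- For fixed λ with -1 ≤ λ ≤ 1 and λ ≠ 0, λ ≠ -1, the function I_λ(t) = ((1-t)^{-λ/2} (1-λ²t)^{-1/2} - 1)/(λ(λ+1)) is strictly increasing on [0,1). -/
open Real Set

theorem stmt_0 (l : ℝ) (hl1 : -1 ≤ l) (hl2 : l ≤ 1) (hl0 : l ≠ 0) (hlm1 : l ≠ -1) :
    StrictMonoOn (fun t : ℝ =>
      ((1 - t) ^ (-(l / 2)) * (1 - l ^ 2 * t) ^ (-(1 / 2 : ℝ)) - 1) / (l * (l + 1)))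
      (Set.Ico (0 : ℝ) 1) := by
  have hc : l * (l + 1) ≠ 0 := by
    have h1 : l + 1 ≠ 0 := fun h => hlm1 (by linarith)
    exact mul_ne_zero hl0 h1
  set f : ℝ → ℝ := fun t =>
      ((1 - t) ^ (-(l / 2)) * (1 - l ^ 2 * t) ^ (-(1 / 2 : ℝ)) - 1) / (l * (l + 1)) with hf
  have key : ∀ t ∈ Set.Ico (0:ℝ) 1, HasDerivAt f
      ((1/2) * ((1-t) ^ (-(l/2) - 1) * (1 - l^2*t) ^ (-(1/2:ℝ) - 1)) * (1 - l*t)) t := by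
    intro t ht
    obtain ⟨ht0, ht1⟩ := ht
    have hu : (0:ℝ) < 1 - t := by linarith
    have hlsq : l^2 ≤ 1 := by nlinarith
    have hv : (0:ℝ) < 1 - l^2*t := by nlinarith [sq_nonneg l]
    have h1 : HasDerivAt (fun t : ℝ => (1 - t) ^ (-(l/2)))
        ((-(l/2)) * (1-t) ^ (-(l/2) - 1) * (-1)) t := by
      have := (Real.hasDerivAt_rpow_const (p := -(l/2)) (Or.inl hu.ne')).comp t
        ((hasDerivAt_id t).const_sub 1)
      simpa [Function.comp_def] using this
    have h2 : HasDerivAt (fun t : ℝ => (1 - l^2*t) ^ (-(1/2:ℝ)))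
        ((-(1/2:ℝ)) * (1-l^2*t) ^ (-(1/2:ℝ) - 1) * (-(l^2))) t := by
      have h2a : HasDerivAt (fun t : ℝ => 1 - l^2*t) (-(l^2)) t := by
        simpa using ((hasDerivAt_id t).const_mul (l^2)).const_sub 1
      have := (Real.hasDerivAt_rpow_const (p := -(1/2:ℝ)) (Or.inl hv.ne')).comp t h2a
      simpa [Function.comp_def] using this
    have h3 := ((h1.mul h2).sub_const 1).div_const (l * (l + 1))
    refine h3.congr_deriv ?_
    rw [show -(l/2) = (-(l/2) - 1) + 1 by ring, Real.rpow_add hu, Real.rpow_one,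
      show -(1/2:ℝ) = (-(1/2:ℝ) - 1) + 1 by ring, Real.rpow_add hv, Real.rpow_one]
    have hl1' : l + 1 ≠ 0 := fun h => hlm1 (by linarith)
    field_simp
    ring
  have hcont : ContinuousOn f (Set.Ico (0:ℝ) 1) :=
    fun t ht => (key t ht).continuousAt.continuousWithinAt
  have := strictMonoOn_of_deriv_pos (convex_Ico (0:ℝ) 1) hcont ?_
  · exact this
  · intro t ht
    rw [interior_Ico] at ht
    obtain ⟨ht0, ht1⟩ := ht
    have hu : (0:ℝ) < 1 - t := by linarith
    have hlsq : l^2 ≤ 1 := by nlinarith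
    have hv : (0:ℝ) < 1 - l^2*t := by nlinarith [sq_nonneg l]
    have hw : (0:ℝ) < 1 - l*t := by nlinarith
    rw [(key t ⟨ht0.le, ht1⟩).deriv]
    positivity
end

section
/- The Pearson divergence satisfies 0 ≤ I_P({p_{ij}}; {p_{i·}p_{·j}}) ≤ (min(r,c) - 1)/2, and therefore the measure ρ²_{(1)} = 1 - (2I_P+1)^{-1} satisfies 0 ≤ ρ²_{(1)} ≤ 1 - 1/min(r,c). -/
open Real Finset

theorem stmt_8 (r c : ℕ) (hr : 0 < r) (hc : 0 < c) (p : Fin r → Fin c → ℝ)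
    (hp : ∀ i j, 0 ≤ p i j) (hsum : ∑ i, ∑ j, p i j = 1)
    (hrow : ∀ i, 0 < ∑ j, p i j) (hcol : ∀ j, 0 < ∑ i, p i j)
    (IP : ℝ)
    (hIP : IP = (1 / 2 : ℝ) * ∑ i, ∑ j,
        (p i j - (∑ j', p i j') * (∑ i', p i' j)) ^ 2 /
          ((∑ j', p i j') * (∑ i', p i' j))) :
    (0 ≤ IP ∧ IP ≤ ((min r c : ℝ) - 1) / 2) ∧
    (0 ≤ 1 - 1 / (2 * IP + 1) ∧ 1 - 1 / (2 * IP + 1) ≤ 1 - 1 / (min r c : ℝ)) := by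
  set R : Fin r → ℝ := fun i => ∑ j, p i j with hR
  set C : Fin c → ℝ := fun j => ∑ i, p i j with hC
  have hRpos : ∀ i, 0 < R i := hrow
  have hCpos : ∀ j, 0 < C j := hcol
  have hsumC : ∑ j, C j = 1 := by
    rw [hC]; rw [Finset.sum_comm]; exact hsum
  have hple_row : ∀ i j, p i j ≤ R i := fun i j =>
    Finset.single_le_sum (fun j' _ => hp i j') (Finset.mem_univ j)
  have hple_col : ∀ i j, p i j ≤ C j := fun i j =>
    Finset.single_le_sum (fun i' _ => hp i' j) (Finset.mem_univ i)
  set S : ℝ := ∑ i, ∑ j, (p i j) ^ 2 / (R i * C j) with hS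
  -- key identity: 2 * IP + 1 = S
  have hkey : 2 * IP + 1 = S := by
    have hterm : ∀ i j, (p i j - R i * C j) ^ 2 / (R i * C j)
        = (p i j) ^ 2 / (R i * C j) - 2 * p i j + R i * C j := by
      intro i j
      have h0 : R i * C j ≠ 0 := ne_of_gt (mul_pos (hRpos i) (hCpos j))
      field_simp
      have hR0 := (hRpos i).ne'
      have hC0 := (hCpos j).ne'
      field_simp
      ring
    have hsum2 : ∑ i, ∑ j, (p i j - R i * C j) ^ 2 / (R i * C j)
        = S - 2 + 1 := by
      simp only [hterm]
      rw [hS]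
      have : ∑ i, ∑ j, ((p i j) ^ 2 / (R i * C j) - 2 * p i j + R i * C j)
          = (∑ i, ∑ j, (p i j) ^ 2 / (R i * C j)) - 2 * (∑ i, ∑ j, p i j)
            + ∑ i, ∑ j, R i * C j := by
        simp [Finset.sum_add_distrib, Finset.sum_sub_distrib, Finset.mul_sum]
      rw [this, hsum]
      have : ∑ i, ∑ j, R i * C j = (∑ i, R i) * (∑ j, C j) := by
        rw [Finset.sum_mul]
        exact Finset.sum_congr rfl fun i _ => by rw [Finset.mul_sum]
      rw [this]
      have hsumR : ∑ i, R i = 1 := hsum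
      rw [hsumR, hsumC]
      ring
    rw [hIP]
    rw [hsum2]
    ring
  have hIPnonneg : 0 ≤ IP := by
    rw [hIP]
    have : 0 ≤ ∑ i, ∑ j, (p i j - R i * C j) ^ 2 / (R i * C j) := by
      apply Finset.sum_nonneg; intro i _
      apply Finset.sum_nonneg; intro j _
      have h0 : 0 < R i * C j := mul_pos (hRpos i) (hCpos j)
      positivity
    linarith
  -- S ≤ c
  have hSc : S ≤ (c : ℝ) := by
    rw [hS, Finset.sum_comm]
    calc ∑ j, ∑ i, (p i j) ^ 2 / (R i * C j)
        ≤ ∑ j : Fin c, (1 : ℝ) := by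
          apply Finset.sum_le_sum; intro j _
          have h1 : ∑ i, (p i j) ^ 2 / (R i * C j) ≤ ∑ i, p i j / C j := by
            apply Finset.sum_le_sum; intro i _
            rw [div_le_div_iff₀ (mul_pos (hRpos i) (hCpos j)) (hCpos j)]
            have h := mul_le_mul_of_nonneg_right (hple_row i j)
              (mul_nonneg (hp i j) (hCpos j).le)
            nlinarith [h]
          have h2 : ∑ i, p i j / C j = 1 := by
            rw [← Finset.sum_div]
            exact div_self (ne_of_gt (hCpos j))
          linarith
      _ = (c : ℝ) := by simp
  have hSr : S ≤ (r : ℝ) := by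
    rw [hS]
    calc ∑ i, ∑ j, (p i j) ^ 2 / (R i * C j)
        ≤ ∑ i : Fin r, (1 : ℝ) := by
          apply Finset.sum_le_sum; intro i _
          have h1 : ∑ j, (p i j) ^ 2 / (R i * C j) ≤ ∑ j, p i j / R i := by
            apply Finset.sum_le_sum; intro j _
            rw [div_le_div_iff₀ (mul_pos (hRpos i) (hCpos j)) (hRpos i)]
            have h := mul_le_mul_of_nonneg_right (hple_col i j)
              (mul_nonneg (hp i j) (hRpos i).le)
            nlinarith [h]
          have h2 : ∑ j, p i j / R i = 1 := by
            rw [← Finset.sum_div]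
            exact div_self (ne_of_gt (hRpos i))
          linarith
      _ = (r : ℝ) := by simp
  have hSmin : S ≤ (min r c : ℝ) := le_min hSr hSc
  have hmin1 : (1 : ℝ) ≤ (min r c : ℝ) :=
    le_min (by exact_mod_cast hr) (by exact_mod_cast hc)
  have hIPle : IP ≤ ((min r c : ℝ) - 1) / 2 := by linarith
  have hden : (0 : ℝ) < 2 * IP + 1 := by linarith
  refine ⟨⟨hIPnonneg, hIPle⟩, ?_, ?_⟩
  · have : 1 / (2 * IP + 1) ≤ 1 := by
      rw [div_le_one hden]; linarith
    linarith
  · have h1 : 1 / (min r c : ℝ) ≤ 1 / (2 * IP + 1) := by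
      apply one_div_le_one_div_of_le hden
      linarith
    linarith
end
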